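/- With A' as in the previous statement (r ≥ 2), a point x = (x_1,...,x_{d+1}) lies in the relative interior of the cone R_+A' if and only if x_i > 0 for i = 1,...,d+1 and x_1 + ··· + x_d > r·x_{d+1}. -/

import Mathlib

/-- The cone of all finite nonnegative real linear combinations of a set `A`. -/
def coneOf {V : Type*} [AddCommMonoid V] [Module ℝ V] (A : Set V) : Set V :=
  {x | ∃ (t : Finset V) (c : V → ℝ), ↑t ⊆ A ∧ (∀ y ∈ t, 0 ≤ c y) ∧
    x = ∑ y ∈ t, c y • y}

section ConeAux

variable {V : Type*} [AddCommMonoid V] [Module ℝ V] {A : Set V}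

lemma coneOf.zero_mem : (0 : V) ∈ coneOf A :=
  ⟨∅, fun _ => 0, by simp, by simp, by simp⟩

lemma coneOf.smul_mem {y : V} (hy : y ∈ A) {c : ℝ} (hc : 0 ≤ c) : c • y ∈ coneOf A :=
  ⟨{y}, fun _ => c, by simpa, fun _ _ => hc, by simp⟩

lemma coneOf.add_mem {x y : V} (hx : x ∈ coneOf A) (hy : y ∈ coneOf A) :
    x + y ∈ coneOf A := by
  classical
  obtain ⟨t₁, c₁, ht₁, hc₁, rfl⟩ := hx
  obtain ⟨t₂, c₂, ht₂, hc₂, rfl⟩ := hy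
  refine ⟨t₁ ∪ t₂,
    fun v => (if v ∈ t₁ then c₁ v else 0) + (if v ∈ t₂ then c₂ v else 0), ?_, ?_, ?_⟩
  · rw [Finset.coe_union]
    exact Set.union_subset ht₁ ht₂
  · intro y _
    have u : 0 ≤ if y ∈ t₁ then c₁ y else 0 := by split; exacts [hc₁ _ ‹_›, le_rfl]
    have v : 0 ≤ if y ∈ t₂ then c₂ y else 0 := by split; exacts [hc₂ _ ‹_›, le_rfl]
    exact add_nonneg u v
  · have h1 : ∀ (t : Finset V) (c : V → ℝ),
        t ⊆ t₁ ∪ t₂ → ∑ v ∈ t₁ ∪ t₂, (if v ∈ t then c v else 0) • v = ∑ v ∈ t, c v • v := by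
      intro t c ht
      rw [← Finset.sum_subset (f := fun v => (if v ∈ t then c v else 0) • v) ht
        (fun v _ hvt => by simp [hvt])]
      exact Finset.sum_congr rfl fun v hv => by simp [hv]
    rw [← h1 t₁ c₁ Finset.subset_union_left, ← h1 t₂ c₂ Finset.subset_union_right,
      ← Finset.sum_add_distrib]
    exact Finset.sum_congr rfl fun v _ => by simp [add_smul]

lemma coneOf.sum_mem {ι : Type*} (s : Finset ι) (f : ι → V)
    (h : ∀ i ∈ s, f i ∈ coneOf A) : ∑ i ∈ s, f i ∈ coneOf A := by
  classical
  induction s using Finset.induction_on with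
  | empty => simpa using coneOf.zero_mem
  | insert _ _ hx ih =>
    rw [Finset.sum_insert hx]
    exact coneOf.add_mem (h _ (Finset.mem_insert_self _ _))
      (ih fun i hi => h i (Finset.mem_insert_of_mem hi))

end ConeAux

/-- A point `x ∈ ℝ^(d+1)` lies in the (relative) interior of the cone generated by
`A' = {e 1, …, e d} ∪ {(a, 1) : a ∈ ℕ^d, |a| = r}` iff all its coordinates are
positive and `x 1 + ⋯ + x d > r * x (d+1)`.  (The cone is full-dimensional, so
the relative interior is the topological interior.) -/
theorem mem_interior_cone_iff (d r : ℕ) (hd : 1 ≤ d) (hr : 2 ≤ r)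
    (x : Fin (d + 1) → ℝ) :
    x ∈ interior (coneOf ((Set.range fun i : Fin d =>
          Pi.single (Fin.castSucc i) (1 : ℝ)) ∪
        {y : Fin (d + 1) → ℝ | ∃ a : Fin d → ℕ, (∑ j, a j) = r ∧
          y = Fin.snoc (fun j => (a j : ℝ)) 1})) ↔
      (∀ i, 0 < x i) ∧ (r : ℝ) * x (Fin.last d) < ∑ i : Fin d, x (Fin.castSucc i) := by
  classical
  set A : Set (Fin (d + 1) → ℝ) := (Set.range fun i : Fin d =>
      Pi.single (Fin.castSucc i) (1 : ℝ)) ∪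
    {y : Fin (d + 1) → ℝ | ∃ a : Fin d → ℕ, (∑ j, a j) = r ∧
      y = Fin.snoc (fun j => (a j : ℝ)) 1} with hA
  have hrpos : (0 : ℝ) < r := by
    have : (0 : ℕ) < r := by omega
    exact_mod_cast this
  -- Every generator has nonnegative coordinates and satisfies the linear inequality.
  have hgen : ∀ y ∈ A, (∀ i, 0 ≤ y i) ∧
      (r : ℝ) * y (Fin.last d) ≤ ∑ i : Fin d, y (Fin.castSucc i) := by
    rintro y (⟨j, rfl⟩ | ⟨a, ha, rfl⟩)
    · refine ⟨fun i => ?_, ?_⟩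
      · show (0 : ℝ) ≤ (Pi.single (Fin.castSucc j) (1 : ℝ) : Fin (d + 1) → ℝ) i
        rw [Pi.single_apply]
        split <;> norm_num
      · show (r : ℝ) * (Pi.single (Fin.castSucc j) (1 : ℝ) : Fin (d + 1) → ℝ) (Fin.last d)
          ≤ ∑ i : Fin d, (Pi.single (Fin.castSucc j) (1 : ℝ) : Fin (d + 1) → ℝ) (Fin.castSucc i)
        have hlast : (Pi.single (Fin.castSucc j) (1 : ℝ) : Fin (d + 1) → ℝ) (Fin.last d) = 0 := by
          rw [Pi.single_apply, if_neg]
          exact (Fin.castSucc_lt_last j).ne'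
        have hsum : ∑ i : Fin d, (Pi.single (Fin.castSucc j) (1 : ℝ) : Fin (d + 1) → ℝ) (Fin.castSucc i)
            = 1 := by
          have : ∀ i : Fin d, (Pi.single (Fin.castSucc j) (1 : ℝ) : Fin (d + 1) → ℝ) (Fin.castSucc i)
              = if i = j then 1 else 0 := by
            intro i
            rw [Pi.single_apply]
            simp [Fin.castSucc_inj]
          simp [this]
        rw [hlast, hsum, mul_zero]
        norm_num
    · constructor
      · intro i
        refine Fin.lastCases ?_ ?_ i
        · rw [Fin.snoc_last]; norm_num
        · intro k
          rw [Fin.snoc_castSucc]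
          positivity
      · have h1 : ∑ i : Fin d, (Fin.snoc (fun j => (a j : ℝ)) 1 : Fin (d+1) → ℝ)
            (Fin.castSucc i) = (r : ℝ) := by
          simp only [Fin.snoc_castSucc]
          rw [← Nat.cast_sum, ha]
        rw [h1, Fin.snoc_last, mul_one]
  -- Every element of the cone satisfies the (weak) inequalities.
  have hCS : ∀ z ∈ coneOf A, (∀ i, 0 ≤ z i) ∧
      (r : ℝ) * z (Fin.last d) ≤ ∑ i : Fin d, z (Fin.castSucc i) := by
    rintro z ⟨t, c, htA, hc, rfl⟩
    constructor
    · intro i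
      rw [Finset.sum_apply]
      refine Finset.sum_nonneg fun y hy => ?_
      exact mul_nonneg (hc y hy) ((hgen y (htA hy)).1 i)
    · have happ : ∀ i, (∑ y ∈ t, c y • y) i = ∑ y ∈ t, c y * y i := by
        intro i; rw [Finset.sum_apply]; rfl
      rw [happ, Finset.mul_sum]
      calc ∑ y ∈ t, (r : ℝ) * (c y * y (Fin.last d))
          = ∑ y ∈ t, c y * ((r : ℝ) * y (Fin.last d)) := by
            exact Finset.sum_congr rfl fun y _ => by ring
        _ ≤ ∑ y ∈ t, c y * (∑ i : Fin d, y (Fin.castSucc i)) := by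
            refine Finset.sum_le_sum fun y hy => ?_
            exact mul_le_mul_of_nonneg_left ((hgen y (htA hy)).2) (hc y hy)
        _ = ∑ i : Fin d, (∑ y ∈ t, c y • y) (Fin.castSucc i) := by
            simp only [happ, Finset.mul_sum]
            exact Finset.sum_comm
  constructor
  · -- forward direction
    intro hx
    rw [mem_interior_iff_mem_nhds, Metric.mem_nhds_iff] at hx
    obtain ⟨ε, hε, hball⟩ := hx
    have hpert : ∀ v : Fin (d + 1) → ℝ, ‖v‖ < ε → (∀ i, 0 ≤ (x + v) i) ∧
        (r : ℝ) * (x + v) (Fin.last d) ≤ ∑ i : Fin d, (x + v) (Fin.castSucc i) := by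
      intro v hv
      refine hCS _ (hball ?_)
      rw [Metric.mem_ball, dist_self_add_left]
      exact hv
    constructor
    · intro i
      have h := (hpert (-(Pi.single i (ε / 2) : Fin (d + 1) → ℝ)) (by
        rw [norm_neg, Pi.norm_single, Real.norm_eq_abs, abs_of_pos (by linarith)]
        linarith)).1 i
      have : (x + -(Pi.single i (ε / 2) : Fin (d + 1) → ℝ)) i = x i - ε / 2 := by
        simp [Pi.single_apply]
        ring
      rw [this] at h
      linarith
    · have h := (hpert ((Pi.single (Fin.last d) (ε / 2) : Fin (d + 1) → ℝ)) (by
        rw [Pi.norm_single, Real.norm_eq_abs, abs_of_pos (by linarith)]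
        linarith)).2
      have h1 : (x + (Pi.single (Fin.last d) (ε / 2) : Fin (d + 1) → ℝ)) (Fin.last d)
          = x (Fin.last d) + ε / 2 := by simp
      have h2 : ∀ i : Fin d, (x + (Pi.single (Fin.last d) (ε / 2) : Fin (d + 1) → ℝ)) (Fin.castSucc i)
          = x (Fin.castSucc i) := by
        intro i
        have : (Pi.single (Fin.last d) (ε / 2) : Fin (d + 1) → ℝ) (Fin.castSucc i) = 0 := by
          rw [Pi.single_apply, if_neg (Fin.castSucc_lt_last i).ne]
        simp [this]
      rw [h1] at h
      have h3 : ∑ i : Fin d, (x + (Pi.single (Fin.last d) (ε / 2) : Fin (d + 1) → ℝ)) (Fin.castSucc i)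
          = ∑ i : Fin d, x (Fin.castSucc i) := Finset.sum_congr rfl fun i _ => h2 i
      rw [h3] at h
      nlinarith
  · -- reverse direction
    rintro ⟨hxpos, hxsum⟩
    set O : Set (Fin (d + 1) → ℝ) :=
      {z | (∀ i, 0 < z i) ∧ (r : ℝ) * z (Fin.last d) < ∑ i : Fin d, z (Fin.castSucc i)}
      with hO
    have hOopen : IsOpen O := by
      have h1 : IsOpen {z : Fin (d + 1) → ℝ | ∀ i, 0 < z i} := by
        have : {z : Fin (d + 1) → ℝ | ∀ i, 0 < z i}
            = ⋂ i, (fun z : Fin (d + 1) → ℝ => z i) ⁻¹' Set.Ioi 0 := by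
          ext z; simp [Set.mem_iInter]
        rw [this]
        exact isOpen_iInter_of_finite fun i => (continuous_apply i).isOpen_preimage _ isOpen_Ioi
      have h2 : IsOpen {z : Fin (d + 1) → ℝ |
          (r : ℝ) * z (Fin.last d) < ∑ i : Fin d, z (Fin.castSucc i)} := by
        have hcont : Continuous fun z : Fin (d + 1) → ℝ =>
            (∑ i : Fin d, z (Fin.castSucc i)) - (r : ℝ) * z (Fin.last d) := by
          apply Continuous.sub
          · exact continuous_finset_sum _ fun i _ => continuous_apply _
          · exact (continuous_const.mul (continuous_apply _))
        have : {z : Fin (d + 1) → ℝ |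
            (r : ℝ) * z (Fin.last d) < ∑ i : Fin d, z (Fin.castSucc i)}
            = (fun z : Fin (d + 1) → ℝ =>
              (∑ i : Fin d, z (Fin.castSucc i)) - (r : ℝ) * z (Fin.last d)) ⁻¹' Set.Ioi 0 := by
          ext z; simp [sub_pos]
        rw [this]
        exact hcont.isOpen_preimage _ isOpen_Ioi
      exact h1.inter h2
    have hOC : O ⊆ coneOf A := by
      rintro z ⟨hzpos, hzsum⟩
      set s : ℝ := ∑ i : Fin d, z (Fin.castSucc i) with hs
      set tt : ℝ := z (Fin.last d) with htt
      have httpos : 0 < tt := hzpos _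
      have hspos : 0 < s := lt_of_le_of_lt (by positivity) hzsum
      have hrts : (r : ℝ) * tt ≤ s := hzsum.le
      set c : Fin d → ℝ := fun i => tt * z (Fin.castSucc i) / s with hc
      set b : Fin d → ℝ := fun i => z (Fin.castSucc i) - r * c i with hb
      set g : Fin d → (Fin (d + 1) → ℝ) := fun i =>
        Fin.snoc (fun j => (((Pi.single i r : Fin d → ℕ) j : ℝ))) 1 with hg
      set e : Fin d → (Fin (d + 1) → ℝ) := fun i =>
        Pi.single (Fin.castSucc i) (1 : ℝ) with he
      have hgA : ∀ i, g i ∈ A := by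
        intro i
        refine Or.inr ⟨Pi.single i r, ?_, rfl⟩
        simp
      have heA : ∀ i, e i ∈ A := fun i => Or.inl ⟨i, rfl⟩
      have hcnn : ∀ i, 0 ≤ c i := by
        intro i
        have := (hzpos (Fin.castSucc i)).le
        rw [hc]
        positivity
      have hbnn : ∀ i, 0 ≤ b i := by
        intro i
        have hz := (hzpos (Fin.castSucc i)).le
        rw [hb, sub_nonneg, hc]
        rw [mul_div_assoc', div_le_iff₀ hspos]
        calc (r : ℝ) * (tt * z (Fin.castSucc i)) = ((r : ℝ) * tt) * z (Fin.castSucc i) := by ring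
          _ ≤ s * z (Fin.castSucc i) := mul_le_mul_of_nonneg_right hrts hz
          _ = z (Fin.castSucc i) * s := by ring
      have hz_eq : z = (∑ i : Fin d, c i • g i) + ∑ i : Fin d, b i • e i := by
        funext j
        have happ : ((∑ i : Fin d, c i • g i) + ∑ i : Fin d, b i • e i) j
            = (∑ i : Fin d, c i * g i j) + ∑ i : Fin d, b i * e i j := by
          simp [Finset.sum_apply]
        rw [happ]
        refine Fin.lastCases ?_ ?_ j
        · have hg1 : ∀ i : Fin d, g i (Fin.last d) = 1 := fun i => by
            rw [hg]; exact Fin.snoc_last _ _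
          have he1 : ∀ i : Fin d, e i (Fin.last d) = 0 := fun i => by
            show (Pi.single (Fin.castSucc i) (1 : ℝ) : Fin (d + 1) → ℝ) (Fin.last d) = 0
            rw [Pi.single_apply, if_neg (Fin.castSucc_lt_last i).ne']
          simp only [hg1, he1, mul_one, mul_zero, Finset.sum_const_zero, add_zero]
          rw [hc]
          simp only []
          rw [← Finset.sum_div, ← Finset.mul_sum, ← hs]
          field_simp
          exact htt.symm
        · intro k
          have hg2 : ∀ i : Fin d, g i (Fin.castSucc k) = if k = i then (r : ℝ) else 0 := by
            intro i
            show (Fin.snoc (fun j => (((Pi.single i r : Fin d → ℕ) j : ℝ))) 1 :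
              Fin (d + 1) → ℝ) (Fin.castSucc k) = if k = i then (r : ℝ) else 0
            rw [Fin.snoc_castSucc, Pi.single_apply]
            split <;> simp_all
          have he2 : ∀ i : Fin d, e i (Fin.castSucc k) = if k = i then 1 else 0 := by
            intro i
            show (Pi.single (Fin.castSucc i) (1 : ℝ) : Fin (d + 1) → ℝ) (Fin.castSucc k) = if k = i then 1 else 0
            rw [Pi.single_apply]
            simp [Fin.castSucc_inj]
          simp only [hg2, he2, mul_ite, mul_zero, mul_one]
          rw [Finset.sum_ite_eq, Finset.sum_ite_eq]
          simp only [Finset.mem_univ, if_true]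
          rw [hb]
          ring
      rw [hz_eq]
      exact coneOf.add_mem
        (coneOf.sum_mem _ _ fun i _ => coneOf.smul_mem (hgA i) (hcnn i))
        (coneOf.sum_mem _ _ fun i _ => coneOf.smul_mem (heA i) (hbnn i))
    exact mem_interior.mpr ⟨O, hOC, hOopen, ⟨hxpos, hxsum⟩⟩
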